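/- In the ℤ₂ toric code condensation model, the global symmetry operator U_g maps coherent states to coherent states by shifting all coherent parameters: for every g ∈ ZMod 2 and all parameters g₀ ∈ ZMod 2, h, g_• : Fin N → ZMod 2, U_g ψ_{g₀; h, g_•} = ψ_{g+g₀; h, (g+g_n)_n}. -/

import Mathlib

/-- The effective Hilbert space of the ℤ₂ toric code condensation model with `N` anyon
sites: functions from (condensate label, per-site (charge, flux)) to `ℂ`. -/
abbrev Hsp (N : ℕ) : Type := (ZMod 2 × (Fin N → ZMod 2 × ZMod 2)) → ℂ

/-- The diagonal operator of multiplication by `c`. -/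
noncomputable def diagOp {X : Type*} (c : X → ℂ) : (X → ℂ) →ₗ[ℂ] (X → ℂ) where
  toFun f := fun x => c x * f x
  map_add' f g := by funext x; simp [mul_add]
  map_smul' r f := by funext x; simp [smul_eq_mul]; ring

/-- The global symmetry operator `(U_g f)(a,j) = (−1)^{g·(a + Σ_n c_n)} f(a,j)`. -/
noncomputable def uOp (N : ℕ) (g : ZMod 2) : Hsp N →ₗ[ℂ] Hsp N :=
  diagOp (fun p => (-1 : ℂ) ^ ((g * (p.1 + ∑ n : Fin N, (p.2 n).1)).val))

/-- The coherent state `ψ_{g₀;h,g}` of the toric code condensation model. -/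
noncomputable def coh (N : ℕ) (g0 : ZMod 2) (h g : Fin N → ZMod 2) : Hsp N :=
  fun p => (((2 : ℝ) ^ (-(((N : ℝ) + 1) / 2)) : ℝ) : ℂ) *
    (-1 : ℂ) ^ (g0.val * p.1.val) *
    ∏ n : Fin N,
      (if (p.2 n).2 = h n then (-1 : ℂ) ^ ((g n).val * ((p.2 n).1).val) else 0)

lemma sign_add_z2 (x y : ZMod 2) :
    (-1 : ℂ) ^ ((x + y).val) = (-1) ^ x.val * (-1) ^ y.val := by
  have h01 : ∀ x : ZMod 2, x = 0 ∨ x = 1 := by decide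
  rcases h01 x with rfl | rfl <;> rcases h01 y with rfl | rfl <;> norm_num [show ((2:ZMod 2)).val = 0 from rfl, show ((1:ZMod 2)).val = 1 from rfl]

lemma sign_key (x y z : ZMod 2) :
    (-1 : ℂ) ^ ((x * z).val) * (-1) ^ (y.val * z.val) = (-1) ^ ((x + y).val * z.val) := by
  have h01 : ∀ x : ZMod 2, x = 0 ∨ x = 1 := by decide
  rcases h01 x with rfl | rfl <;> rcases h01 y with rfl | rfl <;> rcases h01 z with rfl | rfl <;> norm_num [show ((2:ZMod 2)).val = 0 from rfl, show ((1:ZMod 2)).val = 1 from rfl]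

lemma sign_sum_z2 {N : ℕ} (s : Finset (Fin N)) (f : Fin N → ZMod 2) :
    (-1 : ℂ) ^ ((∑ n ∈ s, f n).val) = ∏ n ∈ s, (-1) ^ ((f n).val) := by
  classical
  induction s using Finset.induction with
  | empty => simp
  | insert a s hn ih => rw [Finset.sum_insert hn, Finset.prod_insert hn, sign_add_z2, ih]

/-- the global symmetry operator `U_g` maps coherent states to coherent
states by shifting all coherent parameters:
`U_g ψ_{g₀;h,g_•} = ψ_{g+g₀;h,(g+g_n)_n}`. -/
theorem uOp_coh (N : ℕ) (hN : 1 ≤ N) (g g0 : ZMod 2) (h gv : Fin N → ZMod 2) :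
    uOp N g (coh N g0 h gv) = coh N (g + g0) h (fun n => g + gv n) := by
  funext p
  simp only [uOp, diagOp, coh, LinearMap.coe_mk, AddHom.coe_mk]
  rw [mul_add, sign_add_z2, Finset.mul_sum, sign_sum_z2]
  have hfac : ∀ n : Fin N,
      (-1 : ℂ) ^ ((g * (p.2 n).1).val) *
        (if (p.2 n).2 = h n then (-1 : ℂ) ^ ((gv n).val * ((p.2 n).1).val) else 0) =
      (if (p.2 n).2 = h n then (-1 : ℂ) ^ ((g + gv n).val * ((p.2 n).1).val) else 0) := by
    intro n; rw [mul_ite, mul_zero, sign_key]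
  rw [show ∀ (a b c d e : ℂ), a * b * (c * d * e) = c * (a * d) * (b * e) from
    fun _ _ _ _ _ => by ring, sign_key, ← Finset.prod_mul_distrib]
  exact congrArg _ (Finset.prod_congr rfl fun n _ => hfac n)
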